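/- arXiv:2510.24080 — 3 statements merged into one kernel-verified Lean document; each statement's English description precedes it below -/
import Mathlib

section
/- Let ω > 0, α₂(t) = A + B·cos(2ωt) + C·sin(2ωt) with α₂(t) > 0 for all t, and g(t) = α₂(t)^(-5/2). If z : ℝ → ℝ is twice differentiable and satisfies z'' + ω²·z + g(t)·z² = 0, then the function I(t) = α₂(t)·z'(t)² − α₂'(t)·z(t)·z'(t) + (ω²·α₂(t) + (1/2)·α₂''(t))·z(t)² + (2/3)·α₂(t)·g(t)·z(t)³ is constant. -/
theorem stmt3 (A B C ω : ℝ) (hω : ω > 0)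
    (α₂ g z : ℝ → ℝ)
    (hα₂ : ∀ t, α₂ t = A + B * Real.cos (2 * ω * t) + C * Real.sin (2 * ω * t))
    (hαpos : ∀ t, 0 < α₂ t)
    (hg : ∀ t, g t = (α₂ t) ^ (-(5 / 2 : ℝ)))
    (hz1 : Differentiable ℝ z) (hz2 : Differentiable ℝ (deriv z))
    (hode : ∀ t, deriv (deriv z) t + ω ^ 2 * z t + g t * z t ^ 2 = 0) :
    ∃ c : ℝ, ∀ t,
      α₂ t * (deriv z t) ^ 2 - deriv α₂ t * z t * deriv z t
        + (ω ^ 2 * α₂ t + (1 / 2) * deriv (deriv α₂) t) * z t ^ 2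
        + (2 / 3) * α₂ t * g t * z t ^ 3 = c := by
  set a1 : ℝ → ℝ := fun t => B * (-Real.sin (2 * ω * t) * (2 * ω)) + C * (Real.cos (2 * ω * t) * (2 * ω)) with ha1def
  set a2 : ℝ → ℝ := fun t => -(4 * ω ^ 2) * (B * Real.cos (2 * ω * t) + C * Real.sin (2 * ω * t)) with ha2def
  have hlin : ∀ t : ℝ, HasDerivAt (fun s : ℝ => 2 * ω * s) (2 * ω) t := by
    intro t
    simpa using (hasDerivAt_id t).const_mul (2 * ω)
  have hA1 : ∀ t, HasDerivAt α₂ (a1 t) t := by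
    intro t
    have h : HasDerivAt (fun s => A + B * Real.cos (2 * ω * s) + C * Real.sin (2 * ω * s)) (a1 t) t := by
      have hc : HasDerivAt (fun s : ℝ => Real.cos (2 * ω * s)) (-Real.sin (2 * ω * t) * (2 * ω)) t :=
        (Real.hasDerivAt_cos (2 * ω * t)).comp t (hlin t)
      have hs : HasDerivAt (fun s : ℝ => Real.sin (2 * ω * s)) (Real.cos (2 * ω * t) * (2 * ω)) t :=
        (Real.hasDerivAt_sin (2 * ω * t)).comp t (hlin t)
      exact (((hasDerivAt_const t A).add (hc.const_mul B)).add (hs.const_mul C)).congr_deriv (by simp only [ha1def]; ring)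
    have : α₂ = fun s => A + B * Real.cos (2 * ω * s) + C * Real.sin (2 * ω * s) := funext hα₂
    rw [this]; exact h
  have hA2 : ∀ t, HasDerivAt a1 (a2 t) t := by
    intro t
    have hc : HasDerivAt (fun s : ℝ => Real.cos (2 * ω * s)) (-Real.sin (2 * ω * t) * (2 * ω)) t :=
      (Real.hasDerivAt_cos (2 * ω * t)).comp t (hlin t)
    have hs : HasDerivAt (fun s : ℝ => Real.sin (2 * ω * s)) (Real.cos (2 * ω * t) * (2 * ω)) t :=
      (Real.hasDerivAt_sin (2 * ω * t)).comp t (hlin t)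
    have h := ((hs.const_mul (-B)).mul_const (2 * ω)).add ((hc.const_mul C).mul_const (2 * ω))
    have hf : a1 = (fun y => -B * Real.sin (2 * ω * y) * (2 * ω)) + fun y => C * Real.cos (2 * ω * y) * (2 * ω) := by
      funext s; simp only [ha1def, Pi.add_apply]; ring
    rw [hf]
    exact h.congr_deriv (by simp only [ha2def]; ring)
  have hA3 : ∀ t, HasDerivAt a2 (-(4 * ω ^ 2) * a1 t) t := by
    intro t
    have hc : HasDerivAt (fun s : ℝ => Real.cos (2 * ω * s)) (-Real.sin (2 * ω * t) * (2 * ω)) t :=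
      (Real.hasDerivAt_cos (2 * ω * t)).comp t (hlin t)
    have hs : HasDerivAt (fun s : ℝ => Real.sin (2 * ω * s)) (Real.cos (2 * ω * t) * (2 * ω)) t :=
      (Real.hasDerivAt_sin (2 * ω * t)).comp t (hlin t)
    have h := (((hc.const_mul B).add (hs.const_mul C)).const_mul (-(4 * ω ^ 2)))
    exact h
  have hG : ∀ t, HasDerivAt g (-(5 / 2) * (α₂ t) ^ (-(7 / 2) : ℝ) * a1 t) t := by
    intro t
    have h := (Real.hasDerivAt_rpow_const (p := -(5 / 2 : ℝ)) (Or.inl (hαpos t).ne')).comp t (hA1 t)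
    have hg' : g = fun s => (α₂ s) ^ (-(5 / 2 : ℝ)) := funext hg
    rw [hg']
    rw [show (-(7 / 2 : ℝ)) = -(5 / 2) - 1 by norm_num]
    exact h
  have e1 : deriv α₂ = a1 := funext fun t => (hA1 t).deriv
  have e2 : deriv (deriv α₂) = a2 := by rw [e1]; exact funext fun t => (hA2 t).deriv
  set F : ℝ → ℝ := fun t =>
    α₂ t * (deriv z t) ^ 2 - a1 t * z t * deriv z t
      + (ω ^ 2 * α₂ t + (1 / 2) * a2 t) * z t ^ 2
      + (2 / 3) * α₂ t * g t * z t ^ 3 with hFdef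
  have hF : ∀ t, HasDerivAt F 0 t := by
    intro t
    have hZ1 : HasDerivAt z (deriv z t) t := (hz1 t).hasDerivAt
    have hZ2 : HasDerivAt (deriv z) (deriv (deriv z) t) t := (hz2 t).hasDerivAt
    have t1 : HasDerivAt (fun s => α₂ s * (deriv z s) ^ 2)
        (a1 t * (deriv z t) ^ 2 + α₂ t * (2 * deriv z t ^ 1 * deriv (deriv z) t)) t :=
      (hA1 t).mul (hZ2.pow 2)
    have t2 : HasDerivAt (fun s => a1 s * z s * deriv z s)
        ((a2 t * z t + a1 t * deriv z t) * deriv z t + a1 t * z t * deriv (deriv z) t) t :=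
      ((hA2 t).mul hZ1).mul hZ2
    have t3 : HasDerivAt (fun s => (ω ^ 2 * α₂ s + (1 / 2) * a2 s) * z s ^ 2)
        ((ω ^ 2 * a1 t + (1 / 2) * (-(4 * ω ^ 2) * a1 t)) * z t ^ 2
          + (ω ^ 2 * α₂ t + (1 / 2) * a2 t) * (2 * z t ^ 1 * deriv z t)) t :=
      (((hA1 t).const_mul (ω ^ 2)).add ((hA3 t).const_mul (1 / 2))).mul (hZ1.pow 2)
    have t4 : HasDerivAt (fun s => (2 / 3) * α₂ s * g s * z s ^ 3)
        (((2 / 3) * a1 t * g t + (2 / 3) * α₂ t * (-(5 / 2) * (α₂ t) ^ (-(7 / 2) : ℝ) * a1 t)) * z t ^ 3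
          + (2 / 3) * α₂ t * g t * (3 * z t ^ 2 * deriv z t)) t := by
      exact ((((hA1 t).const_mul (2 / 3 : ℝ)).mul (hG t)).mul (hZ1.pow 3))
    have hsum := ((t1.sub t2).add t3).add t4
    refine hsum.congr_deriv ?_
    have hz'' : deriv (deriv z) t = -(ω ^ 2 * z t) - g t * z t ^ 2 := by
      have := hode t; linarith
    have h7 : (α₂ t) ^ (-(7 / 2) : ℝ) * α₂ t = g t := by
      rw [hg t, ← Real.rpow_add_one (hαpos t).ne' (-(7 / 2))]
      norm_num
    rw [hz'']
    linear_combination (-(5 / 3) * a1 t * z t ^ 3) * h7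
  refine ⟨F 0, fun t => ?_⟩
  have := is_const_of_deriv_eq_zero (f := F) (fun t => (hF t).differentiableAt) (fun t => (hF t).deriv) t 0
  rw [e2, e1]
  exact this
end

section
/- Let ω > 0, A > R > 0, g(t) = α₂(t)^(-5/2) with α₂(t) = A + R·cos(2ωt) > 0, and let z solve z'' + ω²z + g(t)z² = 0 with z(0) = z₀ > 0, z'(0) = 0, where z₀ < (ω²/2)·(A−R)·(A+R)^(3/2). Then at each stroboscopic time t_k = kπ/ω, the point z(t_k) lies in the bounded component of { z : I₀ − ω²(A−R)z² − (2/3)(A+R)^(-3/2)z³ ≥ 0 }, where I₀ = ω²(A−R)z₀² + (2/3)(A+R)^(-3/2)z₀³. -/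
lemma inv_deriv (A R ω : ℝ) (hpos : ∀ t : ℝ, 0 < A + R * Real.cos (2*ω*t))
  (z : ℝ → ℝ) (hz1 : Differentiable ℝ z) (hz2 : Differentiable ℝ (deriv z))
  (hode : ∀ t, deriv (deriv z) t + ω ^ 2 * z t
      + (A + R * Real.cos (2*ω*t)) ^ (-(5/2) : ℝ) * z t ^ 2 = 0)
  (t : ℝ) :
  HasDerivAt (fun t => (A + R*Real.cos (2*ω*t)) * (deriv z t)^2
    + (2*ω*R*Real.sin (2*ω*t)) * (z t * deriv z t)
    + (ω^2*A - ω^2*R*Real.cos (2*ω*t)) * (z t)^2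
    + (2/3) * ((A + R*Real.cos (2*ω*t))^(-(3/2):ℝ) * (z t)^3)) 0 t := by
  have hlin : HasDerivAt (fun t : ℝ => 2*ω*t) (2*ω) t := by
    simpa using (hasDerivAt_id t).const_mul (2*ω)
  have hC : HasDerivAt (fun t => Real.cos (2*ω*t)) (-Real.sin (2*ω*t) * (2*ω)) t := hlin.cos
  have hS : HasDerivAt (fun t => Real.sin (2*ω*t)) (Real.cos (2*ω*t) * (2*ω)) t := hlin.sin
  have hX : HasDerivAt (fun t => A + R*Real.cos (2*ω*t)) (R * (-Real.sin (2*ω*t) * (2*ω))) t :=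
    (hC.const_mul R).const_add A
  have hXpos := hpos t
  have hpow : HasDerivAt (fun t => (A + R*Real.cos (2*ω*t)) ^ (-(3/2):ℝ))
      ((-(3/2)) * (A + R*Real.cos (2*ω*t)) ^ ((-(3/2)) - 1 :ℝ) * (R * (-Real.sin (2*ω*t) * (2*ω)))) t :=
    by have h := HasDerivAt.comp t (Real.hasDerivAt_rpow_const (Or.inl hXpos.ne') :
      HasDerivAt (fun x : ℝ => x ^ (-(3/2):ℝ)) ((-(3/2)) * (A + R*Real.cos (2*ω*t)) ^ ((-(3/2)) - 1 :ℝ))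
        (A + R*Real.cos (2*ω*t))) hX
       exact h
  have hzd : HasDerivAt z (deriv z t) t := (hz1 t).hasDerivAt
  have hpd : HasDerivAt (deriv z) (deriv (deriv z) t) t := (hz2 t).hasDerivAt
  have H := ((hX.mul (hpd.pow 2)).add
      ((hS.const_mul (2*ω*R)).mul (hzd.mul hpd))).add
      (((hC.const_mul (ω^2*R)).const_sub (ω^2*A)).mul (hzd.pow 2)) |>.add
      ((hpow.mul (hzd.pow 3)).const_mul (2/3))
  refine H.congr_deriv (Eq.symm ?_)
  have hQ : deriv (deriv z) t = -(ω^2 * z t) - (A + R*Real.cos (2*ω*t)) ^ (-(5/2) : ℝ) * z t ^ 2 := by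
    have := hode t; linarith
  have hexp : ((-(3/2) : ℝ) - 1) = (-(5/2) : ℝ) := by norm_num
  have hXg : (A + R*Real.cos (2*ω*t)) * (A + R*Real.cos (2*ω*t)) ^ (-(5/2) : ℝ)
      = (A + R*Real.cos (2*ω*t)) ^ (-(3/2) : ℝ) := by
    rw [show (-(3/2) : ℝ) = 1 + (-(5/2)) by norm_num, Real.rpow_add hXpos, Real.rpow_one]
  simp only [Pi.mul_apply, Pi.pow_apply]
  rw [hexp, hQ]
  linear_combination (2 * deriv z t * z t ^ 2) * hXg



lemma barrier_aux (ω A R X zs I0 : ℝ) (hXp : 0 < X)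
    (hsq : Real.sqrt X ^ 2 = X) (hXm : X^(-(3/2):ℝ) * (Real.sqrt X)^3 = 1)
    (hzs : zs = -(ω^2*(A^2-R^2)) * Real.sqrt X)
    (hb : ω^2*(A^2-R^2)*zs^2 + (2/3) * (X^(-(3/2):ℝ) * zs^3) * X ≤ I0 * X)
    (hM : I0 < ω^6 * (A-R)^3 * (A+R)^3 / 3) : False := by
  have hLHS : ω^2*(A^2-R^2)*zs^2 + (2/3) * (X^(-(3/2):ℝ) * zs^3) * X
      = ω^6*(A^2-R^2)^3*X/3 := by
    rw [hzs]
    linear_combination (ω^6*(A^2-R^2)^3) * hsq - (2/3)*(ω^6*(A^2-R^2)^3)*X * hXm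
  rw [hLHS] at hb
  nlinarith [mul_lt_mul_of_pos_right hM hXp]

set_option maxHeartbeats 2000000 in
theorem stmt13 (A R ω z₀ : ℝ) (hω : ω > 0) (hAR : A > R) (hR : R > 0)
    (hz₀ : 0 < z₀) (hcrit : z₀ < (ω ^ 2 / 2) * (A - R) * (A + R) ^ ((3 : ℝ) / 2))
    (α₂ g z : ℝ → ℝ)
    (hα₂ : ∀ t, α₂ t = A + R * Real.cos (2 * ω * t))
    (hg : ∀ t, g t = (α₂ t) ^ (-(5 / 2) : ℝ))
    (hz1 : Differentiable ℝ z) (hz2 : Differentiable ℝ (deriv z))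
    (hode : ∀ t, deriv (deriv z) t + ω ^ 2 * z t + g t * z t ^ 2 = 0)
    (hinit : z 0 = z₀) (hinit' : deriv z 0 = 0) :
    ∀ k : ℤ,
      z ((k : ℝ) * Real.pi / ω) ∈
        connectedComponentIn
          {x : ℝ | 0 ≤ (ω ^ 2 * (A - R) * z₀ ^ 2 + (2 / 3) * (A + R) ^ (-(3 / 2) : ℝ) * z₀ ^ 3)
            - ω ^ 2 * (A - R) * x ^ 2 - (2 / 3) * (A + R) ^ (-(3 / 2) : ℝ) * x ^ 3} 0 := by
  intro k
  have hAR0 : (0:ℝ) < A + R := by linarith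
  have hAmR : (0:ℝ) < A - R := by linarith
  have hpos : ∀ t : ℝ, 0 < A + R * Real.cos (2*ω*t) := by
    intro t
    nlinarith [Real.neg_one_le_cos (2*ω*t), Real.cos_le_one (2*ω*t)]
  set J : ℝ → ℝ := fun t => (A + R*Real.cos (2*ω*t)) * (deriv z t)^2
    + (2*ω*R*Real.sin (2*ω*t)) * (z t * deriv z t)
    + (ω^2*A - ω^2*R*Real.cos (2*ω*t)) * (z t)^2
    + (2/3) * ((A + R*Real.cos (2*ω*t))^(-(3/2):ℝ) * (z t)^3) with hJdef
  have hode' : ∀ t, deriv (deriv z) t + ω ^ 2 * z t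
      + (A + R * Real.cos (2*ω*t)) ^ (-(5/2) : ℝ) * z t ^ 2 = 0 := by
    intro t
    have := hode t
    rw [hg t, hα₂ t] at this
    exact this
  have hJd : ∀ t, HasDerivAt J 0 t := inv_deriv A R ω hpos z hz1 hz2 hode'
  have hconst : ∀ t, J t = J 0 :=
    fun t => is_const_of_deriv_eq_zero (fun s => (hJd s).differentiableAt)
      (fun s => (hJd s).deriv) t 0
  set K : ℝ := (A + R) ^ (-(3 / 2) : ℝ) with hKdef
  set L : ℝ := (A + R) ^ ((3 : ℝ) / 2) with hLdef
  have hKpos : 0 < K := Real.rpow_pos_of_pos hAR0 _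
  have hLpos : 0 < L := Real.rpow_pos_of_pos hAR0 _
  have hKL : K * L = 1 := by
    rw [hKdef, hLdef, ← Real.rpow_add hAR0]
    norm_num
  have hL2 : L ^ 2 = (A + R) ^ 3 := by
    rw [hLdef, ← Real.rpow_natCast ((A+R) ^ ((3:ℝ)/2)) 2, ← Real.rpow_mul hAR0.le,
      ← Real.rpow_natCast (A+R) 3]
    norm_num
  set I₀ : ℝ := ω ^ 2 * (A - R) * z₀ ^ 2 + (2 / 3) * K * z₀ ^ 3 with hI0def
  have hI0pos : 0 < I₀ := by positivity
  have hJ0 : J 0 = I₀ := by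
    rw [hJdef]
    simp only [mul_zero, Real.cos_zero, Real.sin_zero, hinit, hinit', mul_one, zero_mul,
      add_zero, zero_add]
    rw [hI0def, hKdef]
    ring
  -- I₀ < M
  have hM : I₀ < ω^6 * (A-R)^3 * (A+R)^3 / 3 := by
    have hB : ω ^ 2 * (A - R) * ((ω ^ 2 / 2) * (A - R) * L) ^ 2
        + (2 / 3) * K * ((ω ^ 2 / 2) * (A - R) * L) ^ 3 = ω^6 * (A-R)^3 * (A+R)^3 / 3 := by
      linear_combination ((ω^6/4)*(A-R)^3 + (ω^6/12)*(A-R)^3*K*L) * hL2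
        - ((ω^6/12)*(A-R)^3*(A+R)^3) * hKL + ((ω^6/6)*(A^2-R^2)^3) * hKL
    have hz₀B : z₀ < (ω ^ 2 / 2) * (A - R) * L := hcrit
    have hBpos : 0 < (ω ^ 2 / 2) * (A - R) * L := by positivity
    have h2 : z₀ ^ 2 < ((ω ^ 2 / 2) * (A - R) * L) ^ 2 :=
      pow_lt_pow_left₀ hz₀B hz₀.le (by norm_num)
    have h3 : z₀ ^ 3 < ((ω ^ 2 / 2) * (A - R) * L) ^ 3 :=
      pow_lt_pow_left₀ hz₀B hz₀.le (by norm_num)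
    have hc2 : (0:ℝ) < ω^2 * (A - R) := by positivity
    rw [hI0def, ← hB]
    have := mul_lt_mul_of_pos_left h2 hc2
    have := mul_lt_mul_of_pos_left h3 (by positivity : (0:ℝ) < (2/3) * K)
    nlinarith [this]
  -- pointwise lower bound on J t * X t
  have hbound : ∀ t : ℝ, ω^2*(A^2-R^2)*(z t)^2
      + (2/3) * ((A + R*Real.cos (2*ω*t))^(-(3/2):ℝ) * (z t)^3) * (A + R*Real.cos (2*ω*t))
      ≤ J t * (A + R*Real.cos (2*ω*t)) := by
    intro t
    have key : J t * (A + R*Real.cos (2*ω*t)) - (ω^2*(A^2-R^2)*(z t)^2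
        + (2/3) * ((A + R*Real.cos (2*ω*t))^(-(3/2):ℝ) * (z t)^3) * (A + R*Real.cos (2*ω*t)))
        = ((A + R*Real.cos (2*ω*t)) * deriv z t + ω*R*Real.sin (2*ω*t) * z t)^2 := by
      rw [hJdef]
      linear_combination (-(ω^2*R^2*(z t)^2)) * (Real.sin_sq_add_cos_sq (2*ω*t))
    linarith [sq_nonneg ((A + R*Real.cos (2*ω*t)) * deriv z t + ω*R*Real.sin (2*ω*t) * z t), key]
  -- barrier
  have hbar : ∀ t : ℝ, -(ω^2*(A^2-R^2)) * Real.sqrt (A + R*Real.cos (2*ω*t)) < z t := by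
    by_contra hcon
    push_neg at hcon
    obtain ⟨t₁, ht₁⟩ := hcon
    set φ : ℝ → ℝ := fun t => z t + (ω^2*(A^2-R^2)) * Real.sqrt (A + R*Real.cos (2*ω*t)) with hφdef
    have hφc : Continuous φ := by
      apply hz1.continuous.add
      exact continuous_const.mul (Real.continuous_sqrt.comp
        (continuous_const.add (continuous_const.mul
          (Real.continuous_cos.comp (continuous_const.mul continuous_id)))))
    have hφ0 : 0 < φ 0 := by
      rw [hφdef]
      simp only [mul_zero, Real.cos_zero, mul_one, hinit]
      have : 0 ≤ (ω^2*(A^2-R^2)) * Real.sqrt (A + R) := by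
        apply mul_nonneg (by nlinarith) (Real.sqrt_nonneg _)
      linarith
    have hφt₁ : φ t₁ ≤ 0 := by simp only [hφdef]; linarith
    have hmem : (0:ℝ) ∈ Set.uIcc (φ 0) (φ t₁) := by
      rw [Set.mem_uIcc]
      right
      exact ⟨hφt₁, hφ0.le⟩
    obtain ⟨s, _, hs⟩ := intermediate_value_uIcc (hφc.continuousOn) hmem
    have hXp : 0 < A + R*Real.cos (2*ω*s) := hpos s
    set X : ℝ := A + R*Real.cos (2*ω*s) with hXdef
    have hzs : z s = -(ω^2*(A^2-R^2)) * Real.sqrt X := by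
      simp only [hφdef] at hs
      rw [← hXdef] at hs
      linarith [hs]
    have hsq : Real.sqrt X ^ 2 = X := Real.sq_sqrt hXp.le
    have h32 : Real.sqrt X ^ 3 = X ^ ((3:ℝ)/2) := by
      rw [Real.sqrt_eq_rpow, ← Real.rpow_natCast (X ^ ((1:ℝ)/2)) 3, ← Real.rpow_mul hXp.le]
      norm_num
    have hXm : X^(-(3/2):ℝ) * (Real.sqrt X)^3 = 1 := by
      rw [h32, ← Real.rpow_add hXp]
      norm_num
    have hb := hbound s
    rw [hconst s, hJ0] at hb
    exact barrier_aux ω A R X (z s) I₀ hXp hsq hXm hzs hb hM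
  -- evaluate at t_k
  set tk : ℝ := (k : ℝ) * Real.pi / ω with htk
  have harg : 2*ω*tk = (k : ℝ) * (2 * Real.pi) := by
    rw [htk]; field_simp
  have hcos : Real.cos (2*ω*tk) = 1 := by rw [harg]; exact Real.cos_int_mul_two_pi k
  have hsin : Real.sin (2*ω*tk) = 0 := by
    rw [harg, show (k:ℝ)*(2*Real.pi) = ((2*k : ℤ):ℝ) * Real.pi by push_cast; ring]
    exact Real.sin_int_mul_pi (2*k)
  set u : ℝ := z tk with hu
  have hmemF : 0 ≤ I₀ - ω^2*(A-R)*u^2 - (2/3)*K*u^3 := by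
    have hJtk : J tk = (A+R)*(deriv z tk)^2 + ω^2*(A-R)*u^2 + (2/3)*(K*u^3) := by
      rw [hJdef]
      simp only [hcos, hsin, mul_one, zero_mul, mul_zero, add_zero, zero_add]
      rw [hKdef, hu]
      ring
    have h := hconst tk
    rw [hJ0, hJtk] at h
    nlinarith [sq_nonneg (deriv z tk), hAR0]
  have hbaru : -(ω^2*(A-R)) * L < u := by
    have h := hbar tk
    rw [hcos] at h
    have hsl : (A + R*1) = A + R := by ring
    rw [hsl] at h
    have hLe : (A+R) * Real.sqrt (A+R) = L := by
      rw [Real.sqrt_eq_rpow, hLdef]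
      rw [show ((3:ℝ)/2) = 1 + 1/2 by norm_num, Real.rpow_add hAR0, Real.rpow_one]
    nlinarith [h, hLe]
  have hKu : -(ω^2*(A-R)) < K * u := by
    have := mul_lt_mul_of_pos_left hbaru hKpos
    calc -(ω^2*(A-R)) = K * (-(ω^2*(A-R)) * L) := by
          rw [show K * (-(ω^2*(A-R)) * L) = -(ω^2*(A-R)) * (K*L) by ring, hKL]; ring
      _ < K * u := this
  -- the set
  have hsub : Set.uIcc (0:ℝ) u ⊆ {x : ℝ | 0 ≤ I₀ - ω ^ 2 * (A - R) * x ^ 2 - (2/3) * K * x ^ 3} := by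
    intro x hx
    simp only [Set.mem_setOf_eq]
    rcases le_total 0 u with hu0 | hu0
    · rw [Set.uIcc_of_le hu0] at hx
      obtain ⟨hx0, hxu⟩ := hx
      have hbrk : 0 ≤ (u - x) * (ω^2*(A-R)*(u+x) + (2/3)*K*(u^2+u*x+x^2)) := by
        have hux : (0:ℝ) ≤ u * x := mul_nonneg hu0 hx0
        have h1 : (0:ℝ) ≤ ω^2*(A-R)*(u+x) := by positivity
        have h2 : (0:ℝ) ≤ (2/3)*K*(u^2+u*x+x^2) := by
          apply mul_nonneg (by positivity)
          nlinarith [hux]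
        apply mul_nonneg (by linarith) (by linarith)
      nlinarith [hmemF, hbrk]
    · rw [Set.uIcc_of_ge hu0] at hx
      obtain ⟨hxu, hx0⟩ := hx
      have hKxu : -(ω^2*(A-R)) < K * x := by
        have : K * u ≤ K * x := mul_le_mul_of_nonneg_left hxu hKpos.le
        linarith
      have f1 : K*u*u ≤ -(ω^2*(A-R))*u := by nlinarith [hKu]
      have f2 : K*u*x ≤ -(ω^2*(A-R))*x := by nlinarith [hKu]
      have f3 : K*x*x ≤ -(ω^2*(A-R))*x := by nlinarith [hKxu]
      have hbrk : (ω^2*(A-R)*(u+x) + (2/3)*K*(u^2+u*x+x^2)) ≤ 0 := by nlinarith [f1, f2, f3]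
      have hprod : 0 ≤ (x - u) * (-(ω^2*(A-R)*(u+x) + (2/3)*K*(u^2+u*x+x^2))) :=
        mul_nonneg (by linarith) (by linarith)
      nlinarith [hmemF, hprod]
  exact isPreconnected_uIcc.subset_connectedComponentIn Set.left_mem_uIcc hsub Set.right_mem_uIcc
end

section
/- Suppose w : ℝ → ℝ is positive and twice differentiable, f : ℝ → ℝ continuous, and w satisfies the envelope equation w'' + f(t)·w = ω²/w³ with ω > 0. Define Φ(t) = ∫₀ᵗ w(τ)^(-2) dτ. If z solves z'' + f(t)·z = 0 and y is defined by y(Φ(t)) = z(t)/w(t), then y satisfies d²y/dΦ² + ω²·y = 0. -/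
theorem stmt16 (ω : ℝ) (hω : ω > 0) (f w z y Φ : ℝ → ℝ)
    (hf : Continuous f)
    (hw1 : Differentiable ℝ w) (hw2 : Differentiable ℝ (deriv w))
    (hwpos : ∀ t, 0 < w t)
    (henv : ∀ t, deriv (deriv w) t + f t * w t = ω ^ 2 / (w t) ^ 3)
    (hΦ : ∀ t, Φ t = ∫ τ in (0 : ℝ)..t, (w τ) ^ (-2 : ℤ))
    (hz1 : Differentiable ℝ z) (hz2 : Differentiable ℝ (deriv z))
    (hzode : ∀ t, deriv (deriv z) t + f t * z t = 0)
    (hy : ContDiff ℝ 2 y)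
    (hyd : ∀ t, y (Φ t) = z t / w t) :
    ∀ t, deriv (deriv y) (Φ t) + ω ^ 2 * y (Φ t) = 0 := by
  have hwne : ∀ t, w t ≠ 0 := fun t => (hwpos t).ne'
  have hg : Continuous fun τ => (w τ) ^ (-2 : ℤ) :=
    hw1.continuous.zpow₀ _ (fun τ => Or.inl (hwne τ))
  have hΦeq : Φ = fun t => ∫ τ in (0 : ℝ)..t, (w τ) ^ (-2 : ℤ) := funext hΦ
  have hΦ' : ∀ t, HasDerivAt Φ ((w t) ^ (-2 : ℤ)) t := by
    intro t
    rw [hΦeq]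
    exact intervalIntegral.integral_hasDerivAt_right (hg.intervalIntegrable _ _)
      hg.aestronglyMeasurable.stronglyMeasurableAtFilter hg.continuousAt
  have hydiff : Differentiable ℝ y := hy.differentiable two_ne_zero
  have hy' : ContDiff ℝ 1 (deriv y) := (contDiff_succ_iff_deriv.mp (show ContDiff ℝ (1+1) y by norm_num; exact hy)).2.2
  have hy'diff : Differentiable ℝ (deriv y) := hy'.differentiable one_ne_zero
  -- first derivative identity
  have key1 : ∀ t, deriv y (Φ t) = deriv z t * w t - z t * deriv w t := by
    intro t
    have h1 : HasDerivAt (fun t => y (Φ t)) (deriv y (Φ t) * (w t) ^ (-2 : ℤ)) t :=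
      ((hydiff (Φ t)).hasDerivAt).comp t (hΦ' t)
    have h2 : HasDerivAt (fun t => z t / w t)
        ((deriv z t * w t - z t * deriv w t) / (w t) ^ 2) t :=
      ((hz1 t).hasDerivAt).div ((hw1 t).hasDerivAt) (hwne t)
    have heq : (fun t => y (Φ t)) = fun t => z t / w t := funext hyd
    rw [heq] at h1
    have := h1.unique h2
    have hw2ne : (w t) ^ 2 ≠ 0 := pow_ne_zero _ (hwne t)
    have e : (w t) ^ (-2 : ℤ) = ((w t) ^ 2)⁻¹ := by
      rw [zpow_neg, zpow_two, sq]
    rw [e, div_eq_mul_inv] at this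
    exact mul_right_cancel₀ (inv_ne_zero hw2ne) this
  intro t
  have h1 : HasDerivAt (fun t => deriv y (Φ t)) (deriv (deriv y) (Φ t) * (w t) ^ (-2 : ℤ)) t :=
    ((hy'diff (Φ t)).hasDerivAt).comp t (hΦ' t)
  have h2 : HasDerivAt (fun t => deriv z t * w t - z t * deriv w t)
      (deriv (deriv z) t * w t + deriv z t * deriv w t -
        (deriv z t * deriv w t + z t * deriv (deriv w) t)) t :=
    ((hz2 t).hasDerivAt.mul (hw1 t).hasDerivAt).sub
      ((hz1 t).hasDerivAt.mul (hw2 t).hasDerivAt)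
  have heq : (fun t => deriv y (Φ t)) = fun t => deriv z t * w t - z t * deriv w t :=
    funext key1
  rw [heq] at h1
  have hu := h1.unique h2
  have hz'' : deriv (deriv z) t = -(f t * z t) := by linarith [hzode t]
  have hw'' : deriv (deriv w) t = ω ^ 2 / (w t) ^ 3 - f t * w t := by linarith [henv t]
  rw [hz'', hw''] at hu
  rw [hyd t]
  have hwne' := hwne t
  have e : (w t) ^ (-2 : ℤ) = ((w t) ^ 2)⁻¹ := by rw [zpow_neg, zpow_two, sq]
  rw [e] at hu
  field_simp at hu ⊢
  have h2ne : (w t)^2 ≠ 0 := pow_ne_zero _ hwne'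
  have h3 : (deriv (deriv y) (Φ t) * w t + ω ^ 2 * z t) * w t ^ 2 = 0 := by linear_combination (w t) ^ 2 * hu
  rcases mul_eq_zero.mp h3 with h | h
  · linarith [h]
  · exact absurd h h2ne
end
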